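/- Suppose the steady-state constraint 0 = A(T_out − T_sup 𝟙) + M^{-1}(V + W D) and the workload constraint 𝟙^T D = D* hold, with T_sup a scalar. Then T_sup = C_1^T T_out + C_2, where C_1^T = (𝟙^T W^{-1} M A)/(𝟙^T W^{-1} M A 𝟙) and C_2 = (D* + 𝟙^T W^{-1} V)/(𝟙^T W^{-1} M A 𝟙). In particular T_sup is uniquely determined by T_out and D*. -/

import Mathlib

open Matrix

/-- At steady state with total workload `D*`, the supply temperature
is uniquely determined: `T_sup = C₁ᵀ T_out + C₂(D*)`. -/
theorem stmt7 (n : ℕ) (w m : Fin n → ℝ) (cp : ℝ) (A : Matrix (Fin n) (Fin n) ℝ)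
    (V Tout D : Fin n → ℝ) (Tsup Dstar : ℝ)
    (hw : ∀ i, 0 < w i) (hm : ∀ i, 0 < m i) (hcp : 0 < cp)
    (ones : Fin n → ℝ) (hones : ones = fun _ => 1)
    (W M : Matrix (Fin n) (Fin n) ℝ)
    (hW : W = Matrix.diagonal w) (hM : M = Matrix.diagonal (fun i => cp * m i))
    (s : ℝ) (hs : s = Matrix.vecMul ones (W⁻¹ * M * A) ⬝ᵥ ones) (hs0 : s ≠ 0)
    (C1 : Fin n → ℝ) (hC1 : C1 = s⁻¹ • Matrix.vecMul ones (W⁻¹ * M * A))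
    (C2 : ℝ) (hC2 : C2 = (Dstar + ones ⬝ᵥ (W⁻¹).mulVec V) / s)
    (hsteady : 0 = A.mulVec (Tout - Tsup • ones) + (M⁻¹).mulVec (V + W.mulVec D))
    (hwork : ones ⬝ᵥ D = Dstar) :
    Tsup = C1 ⬝ᵥ Tout + C2 := by
  -- invertibility of W and M
  have hWdet : IsUnit W.det := by
    rw [hW, Matrix.det_diagonal]
    exact isUnit_iff_ne_zero.mpr (Finset.prod_ne_zero_iff.mpr fun i _ => (hw i).ne')
  have hMdet : IsUnit M.det := by
    rw [hM, Matrix.det_diagonal]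
    exact isUnit_iff_ne_zero.mpr (Finset.prod_ne_zero_iff.mpr fun i _ =>
      (mul_pos hcp (hm i)).ne')
  have hMM : M * M⁻¹ = 1 := Matrix.mul_nonsing_inv M hMdet
  have hWW : W⁻¹ * W = 1 := Matrix.nonsing_inv_mul W hWdet
  set u := Matrix.vecMul ones (W⁻¹ * M) with hu
  -- apply uᵀ to the steady-state equation
  have key := congrArg (fun v => u ⬝ᵥ v) hsteady
  simp only [dotProduct_zero, dotProduct_add] at key
  have h1 : u ⬝ᵥ A.mulVec (Tout - Tsup • ones)
      = Matrix.vecMul ones (W⁻¹ * M * A) ⬝ᵥ (Tout - Tsup • ones) := by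
    rw [hu, Matrix.dotProduct_mulVec, Matrix.vecMul_vecMul]
  have h2 : u ⬝ᵥ (M⁻¹).mulVec (V + W.mulVec D)
      = ones ⬝ᵥ (W⁻¹).mulVec V + Dstar := by
    rw [hu, Matrix.dotProduct_mulVec, Matrix.vecMul_vecMul, Matrix.mul_assoc, hMM,
      Matrix.mul_one, dotProduct_add, Matrix.dotProduct_mulVec, Matrix.vecMul_vecMul,
      hWW, Matrix.vecMul_one, hwork, ← Matrix.dotProduct_mulVec]
  rw [h1, h2, dotProduct_sub, dotProduct_smul, smul_eq_mul, ← hs] at key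
  have : Tsup * s = Matrix.vecMul ones (W⁻¹ * M * A) ⬝ᵥ Tout
      + (ones ⬝ᵥ (W⁻¹).mulVec V + Dstar) := by linarith
  rw [hC1, hC2, smul_dotProduct, smul_eq_mul, inv_mul_eq_div, ← add_div,
    eq_div_iff hs0]
  linarith
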